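/- Let d ≥ 2 and 1 ≤ m ≤ d be integers, let ζ ∈ ℂ satisfy ζ^m = 1, and let c ∈ ℂ. Define the polynomial maps f, g : ℂ → ℂ by f(z) = z^{d−m}(z^m + c) and g(z) = ζ·f(z). Then f and g have the same set of preperiodic points in ℂ: {z ∈ ℂ : ∃ n > k ≥ 0, f^[n](z) = f^[k](z)} = {z ∈ ℂ : ∃ n > k ≥ 0, g^[n](z) = g^[k](z)}. -/
import Mathlib

/-- Exponent sequence: `aexp e 0 = 0`, `aexp e (n+1) = 1 + e * aexp e n`. -/
def aexp (e : ℕ) : ℕ → ℕ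
  | 0 => 0
  | n + 1 => 1 + e * aexp e n

lemma aexp_modeq (e m i j : ℕ) (h : aexp e i ≡ aexp e j [MOD m]) :
    ∀ t, aexp e (i + t) ≡ aexp e (j + t) [MOD m] := by
  intro t
  induction t with
  | zero => simpa using h
  | succ t ih =>
      have : aexp e (i + t + 1) = 1 + e * aexp e (i + t) := rfl
      rw [show i + (t+1) = (i+t)+1 from rfl, show j + (t+1) = (j+t)+1 from rfl]
      show 1 + e * aexp e (i + t) ≡ 1 + e * aexp e (j + t) [MOD m]
      exact Nat.ModEq.add_left 1 (Nat.ModEq.mul_left e ih)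

lemma iter_eventually_periodic {h : ℂ → ℂ} {z : ℂ} {n k : ℕ} (hkn : k < n)
    (heq : h^[n] z = h^[k] z) : ∀ t s, k ≤ t → h^[t + s * (n - k)] z = h^[t] z := by
  have step : ∀ t, k ≤ t → h^[t + (n - k)] z = h^[t] z := by
    intro t ht
    have h1 : t + (n - k) = (t - k) + n := by omega
    have h2 : t = (t - k) + k := by omega
    rw [h1, Function.iterate_add_apply, heq, ← Function.iterate_add_apply, ← h2]
  intro t s ht
  induction s with
  | zero => simp
  | succ s ih =>
      have : t + (s + 1) * (n - k) = (t + s * (n - k)) + (n - k) := by ring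
      rw [this, step _ (by omega), ih]

lemma conj_iter (d m : ℕ) (hm1 : 1 ≤ m) (ζ : ℂ) (hζ : ζ ^ m = 1) (c : ℂ) :
    ∀ n z, (fun w : ℂ => ζ * (w ^ (d - m) * (w ^ m + c)))^[n] z =
      ζ ^ (aexp (d - m) n) * (fun w : ℂ => w ^ (d - m) * (w ^ m + c))^[n] z := by
  intro n z
  induction n with
  | zero => simp [aexp]
  | succ n ih =>
      rw [Function.iterate_succ_apply', Function.iterate_succ_apply', ih]
      set w := (fun w : ℂ => w ^ (d - m) * (w ^ m + c))^[n] z with hw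
      show ζ * ((ζ ^ aexp (d - m) n * w) ^ (d - m) * ((ζ ^ aexp (d - m) n * w) ^ m + c)) =
        ζ ^ aexp (d - m) (n + 1) * (w ^ (d - m) * (w ^ m + c))
      have hpm : (ζ ^ aexp (d - m) n) ^ m = 1 := by
        rw [← pow_mul, mul_comm, pow_mul, hζ, one_pow]
      rw [mul_pow, mul_pow, hpm, one_mul]
      show _ = ζ ^ (1 + (d - m) * aexp (d - m) n) * _
      rw [pow_add, pow_one, pow_mul]
      ring

lemma pow_eq_of_modeq {m : ℕ} (hm1 : 1 ≤ m) {ζ : ℂ} (hζ : ζ ^ m = 1) {x y : ℕ}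
    (h : x ≡ y [MOD m]) : ζ ^ x = ζ ^ y := by
  have key : ∀ t : ℕ, ζ ^ t = ζ ^ (t % m) := by
    intro t
    conv_lhs => rw [← Nat.mod_add_div t m, pow_add, pow_mul, hζ, one_pow, mul_one]
  rw [key x, key y, h]

theorem statement12 (d m : ℕ) (hd : 2 ≤ d) (hm1 : 1 ≤ m) (hmd : m ≤ d)
    (ζ : ℂ) (hζ : ζ ^ m = 1) (c : ℂ) :
    {z : ℂ | ∃ n k : ℕ, k < n ∧
        (fun w : ℂ => w ^ (d - m) * (w ^ m + c))^[n] z =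
          (fun w : ℂ => w ^ (d - m) * (w ^ m + c))^[k] z} =
    {z : ℂ | ∃ n k : ℕ, k < n ∧
        (fun w : ℂ => ζ * (w ^ (d - m) * (w ^ m + c)))^[n] z =
          (fun w : ℂ => ζ * (w ^ (d - m) * (w ^ m + c)))^[k] z} := by
  set F := fun w : ℂ => w ^ (d - m) * (w ^ m + c) with hF
  set G := fun w : ℂ => ζ * (w ^ (d - m) * (w ^ m + c)) with hG
  have hζ0 : ζ ≠ 0 := by
    intro h
    rw [h, zero_pow (by omega)] at hζ
    exact one_ne_zero hζ.symm
  -- pigeonhole: find i < j with aexp (d-m) i ≡ aexp (d-m) j [MOD m]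
  haveI : NeZero m := ⟨by omega⟩
  obtain ⟨i, j, hij, hmod⟩ : ∃ i j : ℕ, i < j ∧ aexp (d - m) i ≡ aexp (d - m) j [MOD m] := by
    have : ¬ Function.Injective (fun t : Fin (m + 1) => ((aexp (d - m) t : ZMod m))) := by
      intro hinj
      have := Fintype.card_le_of_injective _ hinj
      rw [ZMod.card, Fintype.card_fin] at this
      omega
    rw [Function.not_injective_iff] at this
    obtain ⟨x, y, hxy, hne⟩ := this
    rcases lt_or_gt_of_ne hne with h | h
    · exact ⟨x, y, h, (ZMod.natCast_eq_natCast_iff _ _ _).mp hxy⟩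
    · exact ⟨y, x, h, (ZMod.natCast_eq_natCast_iff _ _ _).mp hxy.symm⟩
  ext z
  simp only [Set.mem_setOf_eq]
  constructor
  · rintro ⟨n, k, hkn, heq⟩
    refine ⟨k + i + (n - k) * (j - i), k + i, by have := Nat.mul_pos (show 0 < n - k by omega) (show 0 < j - i by omega); omega, ?_⟩
    have hF' : F^[k + i + (n - k) * (j - i)] z = F^[k + i] z := by
      have := iter_eventually_periodic hkn heq (k + i) (j - i) (by omega)
      rwa [mul_comm] at this
    have hexp : ζ ^ aexp (d - m) (k + i + (n - k) * (j - i)) = ζ ^ aexp (d - m) (k + i) := by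
      apply pow_eq_of_modeq hm1 hζ
      obtain ⟨q, hq⟩ : (j - i) ∣ (n - k) * (j - i) := ⟨n - k, by ring⟩
      have : k + i + (n - k) * (j - i) = i + (k + (j - i) * q) := by omega
      rw [this, show k + i = i + k from by ring]
      have base := aexp_modeq (d - m) m i j hmod
      -- aexp (i + t) ≡ aexp (j + t) for all t; iterate q times
      have main : ∀ q t, aexp (d - m) (i + (t + (j - i) * q)) ≡ aexp (d - m) (i + t) [MOD m] := by
        intro q
        induction q with
        | zero => intro t; simp [Nat.ModEq.refl]
        | succ q ihq =>
            intro t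
            have h1 : i + (t + (j - i) * (q + 1)) = j + (t + (j - i) * q) := by
              have : (j - i) * (q + 1) = (j - i) * q + (j - i) := by ring
              omega
            rw [h1]
            exact ((base (t + (j - i) * q)).symm).trans (ihq t)
      exact main q k
    rw [conj_iter d m hm1 ζ hζ c, conj_iter d m hm1 ζ hζ c, hexp, hF']
  · rintro ⟨n, k, hkn, heq⟩
    refine ⟨k + i + (n - k) * (j - i), k + i, by have := Nat.mul_pos (show 0 < n - k by omega) (show 0 < j - i by omega); omega, ?_⟩
    have hG' : G^[k + i + (n - k) * (j - i)] z = G^[k + i] z := by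
      have := iter_eventually_periodic hkn heq (k + i) (j - i) (by omega)
      rwa [mul_comm] at this
    have hexp : ζ ^ aexp (d - m) (k + i + (n - k) * (j - i)) = ζ ^ aexp (d - m) (k + i) := by
      apply pow_eq_of_modeq hm1 hζ
      obtain ⟨q, hq⟩ : (j - i) ∣ (n - k) * (j - i) := ⟨n - k, by ring⟩
      have : k + i + (n - k) * (j - i) = i + (k + (j - i) * q) := by omega
      rw [this, show k + i = i + k from by ring]
      have base := aexp_modeq (d - m) m i j hmod
      have main : ∀ q t, aexp (d - m) (i + (t + (j - i) * q)) ≡ aexp (d - m) (i + t) [MOD m] := by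
        intro q
        induction q with
        | zero => intro t; simp [Nat.ModEq.refl]
        | succ q ihq =>
            intro t
            have h1 : i + (t + (j - i) * (q + 1)) = j + (t + (j - i) * q) := by
              have : (j - i) * (q + 1) = (j - i) * q + (j - i) := by ring
              omega
            rw [h1]
            exact ((base (t + (j - i) * q)).symm).trans (ihq t)
      exact main q k
    rw [conj_iter d m hm1 ζ hζ c, conj_iter d m hm1 ζ hζ c, hexp] at hG'
    exact mul_left_cancel₀ (pow_ne_zero _ hζ0) hG'
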